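/- arXiv:1210.3730 — 3 statements merged into one kernel-verified Lean document; each statement's English description precedes it below -/
import Mathlib

section
/- The formula ψ³(h) is consistent with ψ³(c): in the ring ℤ[c, c⁻¹][α], substituting h = c² + 1, the identity (ψ³(c))² + 1 = ψ³(h) holds, where ψ³(c) = c³ + (α³ − 6α − 12)c − 4(α+1)²(α−3)c⁻¹ and ψ³(h) = h³ + (α³ − 6α − 27)h² + 3(−6α³ + α² + 36α + 67)h + 57α³ − 27α² − 334α − 342, modulo the relation w(α) = α⁴ − 6α² + (c² − 8)α − 3 = 0. -/
open Polynomial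

/-- In A = ℤ[c,c⁻¹][α]/(α⁴ − 6α² + (c²−8)α − 3), with h = c² + 1,
P = ψ³(c) and Q = ψ³(h) satisfy P² + 1 = Q. -/
theorem stmt_6 :
    let c : LaurentPolynomial ℤ := LaurentPolynomial.T 1
    let w : Polynomial (LaurentPolynomial ℤ) :=
      X ^ 4 - 6 * X ^ 2 + C (c ^ 2 - 8) * X - 3
    let α : AdjoinRoot w := AdjoinRoot.root w
    let cc : AdjoinRoot w := AdjoinRoot.of w c
    let ci : AdjoinRoot w := AdjoinRoot.of w (LaurentPolynomial.T (-1))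
    let h : AdjoinRoot w := cc ^ 2 + 1
    let P : AdjoinRoot w :=
      cc ^ 3 + (α ^ 3 - 6 * α - 12) * cc - 4 * (α + 1) ^ 2 * (α - 3) * ci
    let Q : AdjoinRoot w :=
      h ^ 3 + (α ^ 3 - 6 * α - 27) * h ^ 2
        + 3 * (-6 * α ^ 3 + α ^ 2 + 36 * α + 67) * h
        + 57 * α ^ 3 - 27 * α ^ 2 - 334 * α - 342
    P ^ 2 + 1 = Q := by
  intro c w α cc ci h P Q
  have hα : α ^ 4 - 6 * α ^ 2 + (cc ^ 2 - 8) * α - 3 = 0 := by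
    have h0 := @AdjoinRoot.mk_self _ _ w
    simp only [w, map_sub, map_add, map_mul, map_pow, AdjoinRoot.mk_X,
      AdjoinRoot.mk_C, map_ofNat] at h0
    convert h0 using 2
  have hinv : cc * ci = 1 := by
    have : cc * ci = AdjoinRoot.of w (LaurentPolynomial.T 1 * LaurentPolynomial.T (-1)) :=
      (map_mul _ _ _).symm
    rw [this, ← LaurentPolynomial.T_add]
    norm_num
  have hP : cc * P = cc ^ 4 + (α ^ 3 - 6 * α - 12) * cc ^ 2
      - 4 * (α + 1) ^ 2 * (α - 3) := by
    simp only [P]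
    linear_combination (-4 * (α + 1) ^ 2 * (α - 3)) * hinv
  have key : cc ^ 2 * (P ^ 2 + 1 - Q) = 0 := by
    simp only [Q, h]
    linear_combination
      (cc * P + (cc ^ 4 + (α ^ 3 - 6 * α - 12) * cc ^ 2 - 4 * (α + 1) ^ 2 * (α - 3))) * hP
      + ((cc ^ 4 - 8 * cc ^ 2 + 16) * α ^ 2 + (8 * cc ^ 2 - 32) * α
         + (-6 * cc ^ 4 + 40 * cc ^ 2 - 48)) * hα
  linear_combination ci ^ 2 * key - ((cc * ci + 1) * (P ^ 2 + 1 - Q)) * hinv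
end

section
/- The quartic f(u)-factorization identity: in the ring ℤ[1/4][a, b, (ab)⁻¹][u], with v + v̄ = (bu² − au − 1)/(ab) and v·v̄ = −u³/(ab), the product ψ̃₃(u,v)·ψ̃₃(u,v̄) (expanded symmetrically in v, v̄ via elementary symmetric polynomials) equals −u⁴·f(u)/(a²b), where ψ̃₃(u,v) = 3u⁴ + (a²+4b)u³v + 3a²bu²v² + 3a²b²uv³ + a²b³v⁴ and f(u) = b⁴u⁸ + 3ab³u⁷ + 3a²b²u⁶ + (a³b + 7ab²)u⁵ + (6a²b − 6b²)u⁴ + 9abu³ + (−a²+8b)u² − 3au − 3. -/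
set_option maxHeartbeats 4000000 in
/-- Over a commutative ring R with 2 and ab invertible, if
v + v̄ = (bu² − au − 1)/(ab) and v·v̄ = −u³/(ab), then
ψ̃₃(u,v)·ψ̃₃(u,v̄) = −u⁴·f(u)/(a²b). -/
theorem stmt_13 {R : Type*} [CommRing R] [Invertible (2 : R)] (a b u v w : R)
    [Invertible (a * b)]
    (h1 : v + w = (b * u ^ 2 - a * u - 1) * ⅟(a * b))
    (h2 : v * w = -u ^ 3 * ⅟(a * b)) :
    (3 * u ^ 4 + (a ^ 2 + 4 * b) * u ^ 3 * v + 3 * a ^ 2 * b * u ^ 2 * v ^ 2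
        + 3 * a ^ 2 * b ^ 2 * u * v ^ 3 + a ^ 2 * b ^ 3 * v ^ 4)
      * (3 * u ^ 4 + (a ^ 2 + 4 * b) * u ^ 3 * w + 3 * a ^ 2 * b * u ^ 2 * w ^ 2
        + 3 * a ^ 2 * b ^ 2 * u * w ^ 3 + a ^ 2 * b ^ 3 * w ^ 4)
      = -(u ^ 4
          * (b ^ 4 * u ^ 8 + 3 * a * b ^ 3 * u ^ 7 + 3 * a ^ 2 * b ^ 2 * u ^ 6
            + (a ^ 3 * b + 7 * a * b ^ 2) * u ^ 5 + (6 * a ^ 2 * b - 6 * b ^ 2) * u ^ 4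
            + 9 * a * b * u ^ 3 + (-a ^ 2 + 8 * b) * u ^ 2 - 3 * a * u - 3))
          * (b * ⅟(a * b) ^ 2) := by
  have h3 : a * b * ⅟(a*b) = 1 := mul_invOf_self (a*b)
  linear_combination (((12:R)*b*u^7 + (3:R)*a^2*u^7 + (-9:R)*a^2*b*u^6*(⅟(a*b)) + (9:R)*a^2*b*u^6*w + (9:R)*a^2*b*u^6*v + (9:R)*a^2*b^2*u^5*(⅟(a*b))^2 + (-9:R)*a^2*b^2*u^5*w*(⅟(a*b)) + (9:R)*a^2*b^2*u^5*w^2 + (-9:R)*a^2*b^2*u^5*v*(⅟(a*b)) + (3:R)*a^2*b^2*u^5*v*w + (9:R)*a^2*b^2*u^5*v^2 + (9:R)*a^2*b^2*u^8*(⅟(a*b)) + (-3:R)*a^2*b^3*u^4*(⅟(a*b))^3 + (3:R)*a^2*b^3*u^4*w*(⅟(a*b))^2 + (-3:R)*a^2*b^3*u^4*w^2*(⅟(a*b)) + (3:R)*a^2*b^3*u^4*w^3 + (3:R)*a^2*b^3*u^4*v*(⅟(a*b))^2 + (-6:R)*a^2*b^3*u^4*v*w*(⅟(a*b)) + (-9:R)*a^2*b^3*u^4*v*w^2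 + (-3:R)*a^2*b^3*u^4*v^2*(⅟(a*b)) + (9:R)*a^2*b^3*u^4*v^2*w + (3:R)*a^2*b^3*u^4*v^3 + (-18:R)*a^2*b^3*u^7*(⅟(a*b))^2 + (-9:R)*a^2*b^3*u^7*w*(⅟(a*b)) + (9:R)*a^2*b^3*u^7*v*(⅟(a*b)) + (4:R)*a^2*b^4*u^3*v*w*(⅟(a*b))^2 + (8:R)*a^2*b^4*u^3*v*w^2*(⅟(a*b)) + (4:R)*a^2*b^4*u^3*v*w^3 + (-4:R)*a^2*b^4*u^3*v^2*w*(⅟(a*b)) + (-4:R)*a^2*b^4*u^3*v^2*w^2 + (4:R)*a^2*b^4*u^3*v^3*w + (9:R)*a^2*b^4*u^6*(⅟(a*b))^3 + (6:R)*a^2*b^4*u^6*w*(⅟(a*b))^2 + (3:R)*a^2*b^4*u^6*w^2*(⅟(a*b)) + (-6:R)*a^2*b^4*u^6*v*(⅟(a*b))^2 + (6:R)*a^2*b^4*u^6*v*w*(⅟(a*b)) + (3:R)*a^2*b^4*u^6*v^2*(⅟(a*b)) + (9:R)*a^2*b^4*u^9*(⅟(a*b))^2 + (-8:R)*a^2*b^5*u^5*v*w*(⅟(a*b))^2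 + (-8:R)*a^2*b^5*u^5*v*w^2*(⅟(a*b)) + (4:R)*a^2*b^5*u^5*v^2*w*(⅟(a*b)) + (-9:R)*a^2*b^5*u^8*(⅟(a*b))^3 + (-9:R)*a^2*b^5*u^8*w*(⅟(a*b))^2 + (3:R)*a^2*b^5*u^8*v*(⅟(a*b))^2 + (4:R)*a^2*b^6*u^7*v*w*(⅟(a*b))^2 + (3:R)*a^2*b^6*u^10*(⅟(a*b))^3 + (-9:R)*a^3*b*u^7*(⅟(a*b)) + (18:R)*a^3*b^2*u^6*(⅟(a*b))^2 + (-9:R)*a^3*b^2*u^6*w*(⅟(a*b)) + (-9:R)*a^3*b^2*u^6*v*(⅟(a*b)) + (-9:R)*a^3*b^3*u^5*(⅟(a*b))^3 + (6:R)*a^3*b^3*u^5*w*(⅟(a*b))^2 + (-3:R)*a^3*b^3*u^5*w^2*(⅟(a*b)) + (6:R)*a^3*b^3*u^5*v*(⅟(a*b))^2 + (-6:R)*a^3*b^3*u^5*v*w*(⅟(a*b)) + (-3:R)*a^3*b^3*u^5*v^2*(⅟(a*b)) + (-18:R)*a^3*b^3*u^8*(⅟(a*b))^2 + (8:R)*a^3*b^4*u^4*v*w*(⅟(a*b))^2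 + (8:R)*a^3*b^4*u^4*v*w^2*(⅟(a*b)) + (-4:R)*a^3*b^4*u^4*v^2*w*(⅟(a*b)) + (18:R)*a^3*b^4*u^7*(⅟(a*b))^3 + (6:R)*a^3*b^4*u^7*w*(⅟(a*b))^2 + (-6:R)*a^3*b^4*u^7*v*(⅟(a*b))^2 + (-8:R)*a^3*b^5*u^6*v*w*(⅟(a*b))^2 + (-9:R)*a^3*b^5*u^9*(⅟(a*b))^3 + (3:R)*a^4*b*u^5*v*w + (-3:R)*a^4*b^2*u^4*v*w*(⅟(a*b)) + (6:R)*a^4*b^2*u^4*v*w^2 + (3:R)*a^4*b^2*u^4*v^2*w + (9:R)*a^4*b^2*u^7*(⅟(a*b))^2 + (3:R)*a^4*b^2*u^7*w*(⅟(a*b)) + (1:R)*a^4*b^3*u^3*v*w*(⅟(a*b))^2 + (-7:R)*a^4*b^3*u^3*v*w^2*(⅟(a*b)) + (1:R)*a^4*b^3*u^3*v*w^3 + (-1:R)*a^4*b^3*u^3*v^2*w*(⅟(a*b)) + (8:R)*a^4*b^3*u^3*v^2*w^2 + (1:R)*a^4*b^3*u^3*v^3*w + (-9:R)*a^4*b^3*u^6*(⅟(a*b))^3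 + (-3:R)*a^4*b^3*u^6*w*(⅟(a*b))^2 + (3:R)*a^4*b^3*u^6*v*(⅟(a*b))^2 + (3:R)*a^4*b^3*u^6*v*w*(⅟(a*b)) + (3:R)*a^4*b^4*u^2*v*w^2*(⅟(a*b))^2 + (-3:R)*a^4*b^4*u^2*v*w^3*(⅟(a*b)) + (-3:R)*a^4*b^4*u^2*v*w^4 + (-3:R)*a^4*b^4*u^2*v^2*w^2*(⅟(a*b)) + (6:R)*a^4*b^4*u^2*v^2*w^3 + (3:R)*a^4*b^4*u^2*v^3*w^2 + (3:R)*a^4*b^4*u^5*w*(⅟(a*b))^3 + (-3:R)*a^4*b^4*u^5*w^2*(⅟(a*b))^2 + (-3:R)*a^4*b^4*u^5*w^3*(⅟(a*b)) + (2:R)*a^4*b^4*u^5*v*w*(⅟(a*b))^2 + (7:R)*a^4*b^4*u^5*v*w^2*(⅟(a*b)) + (1:R)*a^4*b^4*u^5*v^2*w*(⅟(a*b)) + (9:R)*a^4*b^4*u^8*(⅟(a*b))^3 + (3:R)*a^4*b^4*u^8*w*(⅟(a*b))^2 + (3:R)*a^4*b^5*u*v*w^3*(⅟(a*b))^2 +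 (3:R)*a^4*b^5*u*v*w^4*(⅟(a*b)) + (-3:R)*a^4*b^5*u*v^2*w^3*(⅟(a*b)) + (3:R)*a^4*b^5*u*v^3*w^3 + (3:R)*a^4*b^5*u^4*w^2*(⅟(a*b))^3 + (3:R)*a^4*b^5*u^4*w^3*(⅟(a*b))^2 + (-6:R)*a^4*b^5*u^4*v*w^2*(⅟(a*b))^2 + (3:R)*a^4*b^5*u^4*v*w^3*(⅟(a*b)) + (3:R)*a^4*b^5*u^4*v^2*w^2*(⅟(a*b)) + (-3:R)*a^4*b^5*u^7*w*(⅟(a*b))^3 + (3:R)*a^4*b^5*u^7*w^2*(⅟(a*b))^2 + (1:R)*a^4*b^5*u^7*v*w*(⅟(a*b))^2 + (1:R)*a^4*b^6*v*w^4*(⅟(a*b))^2 + (2:R)*a^4*b^6*v*w^5*(⅟(a*b)) + (1:R)*a^4*b^6*v*w^6 + (-1:R)*a^4*b^6*v^2*w^4*(⅟(a*b)) + (-1:R)*a^4*b^6*v^2*w^5 + (1:R)*a^4*b^6*v^3*w^4 + (1:R)*a^4*b^6*u^3*w^3*(⅟(a*b))^3 + (2:R)*a^4*b^6*u^3*w^4*(⅟(a*b))^2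 + (1:R)*a^4*b^6*u^3*w^5*(⅟(a*b)) + (-6:R)*a^4*b^6*u^3*v*w^3*(⅟(a*b))^2 + (-3:R)*a^4*b^6*u^3*v*w^4*(⅟(a*b)) + (3:R)*a^4*b^6*u^3*v^2*w^3*(⅟(a*b)) + (-5:R)*a^4*b^6*u^6*w^2*(⅟(a*b))^3 + (-2:R)*a^4*b^6*u^6*w^3*(⅟(a*b))^2 + (3:R)*a^4*b^6*u^6*v*w^2*(⅟(a*b))^2 + (1:R)*a^4*b^6*u^9*w*(⅟(a*b))^3 + (-2:R)*a^4*b^7*u^2*v*w^4*(⅟(a*b))^2 + (-2:R)*a^4*b^7*u^2*v*w^5*(⅟(a*b)) + (1:R)*a^4*b^7*u^2*v^2*w^4*(⅟(a*b)) + (-2:R)*a^4*b^7*u^5*w^3*(⅟(a*b))^3 + (-2:R)*a^4*b^7*u^5*w^4*(⅟(a*b))^2 + (3:R)*a^4*b^7*u^5*v*w^3*(⅟(a*b))^2 + (2:R)*a^4*b^7*u^8*w^2*(⅟(a*b))^3 + (1:R)*a^4*b^8*u^4*v*w^4*(⅟(a*b))^2 + (1:R)*a^4*b^8*u^7*w^3*(⅟(a*b))^3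 + (-3:R)*a^5*b^2*u^5*v*w*(⅟(a*b)) + (2:R)*a^5*b^3*u^4*v*w*(⅟(a*b))^2 + (-7:R)*a^5*b^3*u^4*v*w^2*(⅟(a*b)) + (-1:R)*a^5*b^3*u^4*v^2*w*(⅟(a*b)) + (-3:R)*a^5*b^3*u^7*(⅟(a*b))^3 + (-6:R)*a^5*b^3*u^7*w*(⅟(a*b))^2 + (6:R)*a^5*b^4*u^3*v*w^2*(⅟(a*b))^2 + (-3:R)*a^5*b^4*u^3*v*w^3*(⅟(a*b)) + (-3:R)*a^5*b^4*u^3*v^2*w^2*(⅟(a*b)) + (6:R)*a^5*b^4*u^6*w*(⅟(a*b))^3 + (-3:R)*a^5*b^4*u^6*w^2*(⅟(a*b))^2 + (-2:R)*a^5*b^4*u^6*v*w*(⅟(a*b))^2 + (6:R)*a^5*b^5*u^2*v*w^3*(⅟(a*b))^2 + (3:R)*a^5*b^5*u^2*v*w^4*(⅟(a*b)) + (-3:R)*a^5*b^5*u^2*v^2*w^3*(⅟(a*b)) + (6:R)*a^5*b^5*u^5*w^2*(⅟(a*b))^3 + (3:R)*a^5*b^5*u^5*w^3*(⅟(a*b))^2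 + (-6:R)*a^5*b^5*u^5*v*w^2*(⅟(a*b))^2 + (-3:R)*a^5*b^5*u^8*w*(⅟(a*b))^3 + (2:R)*a^5*b^6*u*v*w^4*(⅟(a*b))^2 + (2:R)*a^5*b^6*u*v*w^5*(⅟(a*b)) + (-1:R)*a^5*b^6*u*v^2*w^4*(⅟(a*b)) + (2:R)*a^5*b^6*u^4*w^3*(⅟(a*b))^3 + (2:R)*a^5*b^6*u^4*w^4*(⅟(a*b))^2 + (-6:R)*a^5*b^6*u^4*v*w^3*(⅟(a*b))^2 + (-5:R)*a^5*b^6*u^7*w^2*(⅟(a*b))^3 + (-2:R)*a^5*b^7*u^3*v*w^4*(⅟(a*b))^2 + (-2:R)*a^5*b^7*u^6*w^3*(⅟(a*b))^3 + (1:R)*a^6*b^3*u^5*v*w*(⅟(a*b))^2 + (3:R)*a^6*b^4*u^4*v*w^2*(⅟(a*b))^2 + (3:R)*a^6*b^4*u^7*w*(⅟(a*b))^3 + (3:R)*a^6*b^5*u^3*v*w^3*(⅟(a*b))^2 + (3:R)*a^6*b^5*u^6*w^2*(⅟(a*b))^3 + (1:R)*a^6*b^6*u^2*v*w^4*(⅟(a*b))^2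 + (1:R)*a^6*b^6*u^5*w^3*(⅟(a*b))^3)) * h1 + (((16:R)*b^2*u^6 + (-10:R)*a^2*b*u^6 + (15:R)*a^2*b^2*u^5*(⅟(a*b)) + (18:R)*a^2*b^3*u^4*w*(⅟(a*b)) + (18:R)*a^2*b^3*u^4*w^2 + (3:R)*a^2*b^3*u^7*(⅟(a*b)) + (-4:R)*a^2*b^4*u^3*(⅟(a*b))^3 + (-12:R)*a^2*b^4*u^3*w*(⅟(a*b))^2 + (-12:R)*a^2*b^4*u^3*w^2*(⅟(a*b)) + (-12:R)*a^2*b^4*u^6*(⅟(a*b))^2 + (-18:R)*a^2*b^4*u^6*w*(⅟(a*b)) + (12:R)*a^2*b^5*u^5*(⅟(a*b))^3 + (24:R)*a^2*b^5*u^5*w*(⅟(a*b))^2 + (12:R)*a^2*b^5*u^5*w^2*(⅟(a*b)) + (12:R)*a^2*b^5*u^8*(⅟(a*b))^2 + (-12:R)*a^2*b^6*u^7*(⅟(a*b))^3 + (-12:R)*a^2*b^6*u^7*w*(⅟(a*b))^2 + (4:R)*a^2*b^7*u^9*(⅟(a*b))^3 + (15:R)*a^3*b^2*u^6*(⅟(a*b))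 + (18:R)*a^3*b^3*u^5*w*(⅟(a*b)) + (-12:R)*a^3*b^4*u^4*(⅟(a*b))^3 + (-24:R)*a^3*b^4*u^4*w*(⅟(a*b))^2 + (-12:R)*a^3*b^4*u^4*w^2*(⅟(a*b)) + (-12:R)*a^3*b^4*u^7*(⅟(a*b))^2 + (24:R)*a^3*b^5*u^6*(⅟(a*b))^3 + (24:R)*a^3*b^5*u^6*w*(⅟(a*b))^2 + (-12:R)*a^3*b^6*u^8*(⅟(a*b))^3 + (1:R)*a^4*u^6 + (-3:R)*a^4*b*u^5*(⅟(a*b)) + (3:R)*a^4*b^2*u^4*(⅟(a*b))^2 + (-3:R)*a^4*b^2*u^4*w*(⅟(a*b)) + (-3:R)*a^4*b^2*u^4*w^2 + (-1:R)*a^4*b^3*u^3*(⅟(a*b))^3 + (6:R)*a^4*b^3*u^3*w*(⅟(a*b))^2 + (6:R)*a^4*b^3*u^3*w^2*(⅟(a*b)) + (3:R)*a^4*b^3*u^6*w*(⅟(a*b)) + (-3:R)*a^4*b^4*u^2*w*(⅟(a*b))^3 + (6:R)*a^4*b^4*u^2*w^3*(⅟(a*b)) + (3:R)*a^4*b^4*u^2*w^4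 + (-12:R)*a^4*b^4*u^5*(⅟(a*b))^3 + (-21:R)*a^4*b^4*u^5*w*(⅟(a*b))^2 + (-3:R)*a^4*b^4*u^5*w^2*(⅟(a*b)) + (-3:R)*a^4*b^5*u*w^2*(⅟(a*b))^3 + (-6:R)*a^4*b^5*u*w^3*(⅟(a*b))^2 + (-3:R)*a^4*b^5*u*w^4*(⅟(a*b)) + (6:R)*a^4*b^5*u^4*w*(⅟(a*b))^3 + (-3:R)*a^4*b^5*u^4*w^2*(⅟(a*b))^2 + (-6:R)*a^4*b^5*u^4*w^3*(⅟(a*b)) + (12:R)*a^4*b^5*u^7*(⅟(a*b))^3 + (3:R)*a^4*b^5*u^7*w*(⅟(a*b))^2 + (-1:R)*a^4*b^6*w^3*(⅟(a*b))^3 + (-3:R)*a^4*b^6*w^4*(⅟(a*b))^2 + (-3:R)*a^4*b^6*w^5*(⅟(a*b)) + (-1:R)*a^4*b^6*w^6 + (8:R)*a^4*b^6*u^3*w^2*(⅟(a*b))^3 + (10:R)*a^4*b^6*u^3*w^3*(⅟(a*b))^2 + (2:R)*a^4*b^6*u^3*w^4*(⅟(a*b)) + (-4:R)*a^4*b^6*u^6*w*(⅟(a*b))^3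 + (2:R)*a^4*b^6*u^6*w^2*(⅟(a*b))^2 + (3:R)*a^4*b^7*u^2*w^3*(⅟(a*b))^3 + (6:R)*a^4*b^7*u^2*w^4*(⅟(a*b))^2 + (3:R)*a^4*b^7*u^2*w^5*(⅟(a*b)) + (-7:R)*a^4*b^7*u^5*w^2*(⅟(a*b))^3 + (-4:R)*a^4*b^7*u^5*w^3*(⅟(a*b))^2 + (1:R)*a^4*b^7*u^8*w*(⅟(a*b))^3 + (-3:R)*a^4*b^8*u^4*w^3*(⅟(a*b))^3 + (-3:R)*a^4*b^8*u^4*w^4*(⅟(a*b))^2 + (2:R)*a^4*b^8*u^7*w^2*(⅟(a*b))^3 + (1:R)*a^4*b^9*u^6*w^3*(⅟(a*b))^3 + (-3:R)*a^5*b*u^6*(⅟(a*b)) + (6:R)*a^5*b^2*u^5*(⅟(a*b))^2 + (-3:R)*a^5*b^2*u^5*w*(⅟(a*b)) + (-3:R)*a^5*b^3*u^4*(⅟(a*b))^3 + (12:R)*a^5*b^3*u^4*w*(⅟(a*b))^2 + (6:R)*a^5*b^3*u^4*w^2*(⅟(a*b)) + (-9:R)*a^5*b^4*u^3*w*(⅟(a*b))^3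 + (6:R)*a^5*b^4*u^3*w^3*(⅟(a*b)) + (-4:R)*a^5*b^4*u^6*(⅟(a*b))^3 + (-9:R)*a^5*b^4*u^6*w*(⅟(a*b))^2 + (-9:R)*a^5*b^5*u^2*w^2*(⅟(a*b))^3 + (-12:R)*a^5*b^5*u^2*w^3*(⅟(a*b))^2 + (-3:R)*a^5*b^5*u^2*w^4*(⅟(a*b)) + (12:R)*a^5*b^5*u^5*w*(⅟(a*b))^3 + (-3:R)*a^5*b^5*u^5*w^2*(⅟(a*b))^2 + (-3:R)*a^5*b^6*u*w^3*(⅟(a*b))^3 + (-6:R)*a^5*b^6*u*w^4*(⅟(a*b))^2 + (-3:R)*a^5*b^6*u*w^5*(⅟(a*b)) + (16:R)*a^5*b^6*u^4*w^2*(⅟(a*b))^3 + (10:R)*a^5*b^6*u^4*w^3*(⅟(a*b))^2 + (-4:R)*a^5*b^6*u^7*w*(⅟(a*b))^3 + (6:R)*a^5*b^7*u^3*w^3*(⅟(a*b))^3 + (6:R)*a^5*b^7*u^3*w^4*(⅟(a*b))^2 + (-7:R)*a^5*b^7*u^6*w^2*(⅟(a*b))^3 + (-3:R)*a^5*b^8*u^5*w^3*(⅟(a*b))^3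 + (3:R)*a^6*b^2*u^6*(⅟(a*b))^2 + (-3:R)*a^6*b^3*u^5*(⅟(a*b))^3 + (6:R)*a^6*b^3*u^5*w*(⅟(a*b))^2 + (-9:R)*a^6*b^4*u^4*w*(⅟(a*b))^3 + (-9:R)*a^6*b^5*u^3*w^2*(⅟(a*b))^3 + (-6:R)*a^6*b^5*u^3*w^3*(⅟(a*b))^2 + (6:R)*a^6*b^5*u^6*w*(⅟(a*b))^3 + (-3:R)*a^6*b^6*u^2*w^3*(⅟(a*b))^3 + (-3:R)*a^6*b^6*u^2*w^4*(⅟(a*b))^2 + (8:R)*a^6*b^6*u^5*w^2*(⅟(a*b))^3 + (3:R)*a^6*b^7*u^4*w^3*(⅟(a*b))^3 + (-1:R)*a^7*b^3*u^6*(⅟(a*b))^3 + (-3:R)*a^7*b^4*u^5*w*(⅟(a*b))^3 + (-3:R)*a^7*b^5*u^4*w^2*(⅟(a*b))^3 + (-1:R)*a^7*b^6*u^3*w^3*(⅟(a*b))^3)) * h2 + (((-9:R)*u^8 + (3:R)*b*u^4*(⅟(a*b))^2 + (12:R)*b*u^7*(⅟(a*b)) + (-8:R)*b^2*u^6*(⅟(a*b))^2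 + (4:R)*b^2*u^9*(⅟(a*b)) + (6:R)*b^3*u^8*(⅟(a*b))^2 + (-1:R)*b^5*u^12*(⅟(a*b))^2 + (3:R)*a*b*u^5*(⅟(a*b))^2 + (3:R)*a*b*u^8*(⅟(a*b)) + (3:R)*a*b^2*u^4*(⅟(a*b))^3 + (3:R)*a*b^2*u^7*(⅟(a*b))^2 + (-8:R)*a*b^3*u^6*(⅟(a*b))^3 + (-3:R)*a*b^3*u^9*(⅟(a*b))^2 + (6:R)*a*b^4*u^8*(⅟(a*b))^3 + (-3:R)*a*b^4*u^11*(⅟(a*b))^2 + (-1:R)*a*b^6*u^12*(⅟(a*b))^3 + (3:R)*a^2*u^7*(⅟(a*b)) + (-8:R)*a^2*b*u^6*(⅟(a*b))^2 + (-13:R)*a^2*b*u^9*(⅟(a*b)) + (12:R)*a^2*b^2*u^5*(⅟(a*b))^3 + (30:R)*a^2*b^2*u^8*(⅟(a*b))^2 + (-24:R)*a^2*b^3*u^7*(⅟(a*b))^3 + (-9:R)*a^2*b^3*u^10*(⅟(a*b))^2 + (12:R)*a^2*b^4*u^9*(⅟(a*b))^3 + (3:R)*a^3*u^8*(⅟(a*b))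 + (-15:R)*a^3*b*u^7*(⅟(a*b))^2 + (19:R)*a^3*b^2*u^6*(⅟(a*b))^3 + (19:R)*a^3*b^2*u^9*(⅟(a*b))^2 + (-24:R)*a^3*b^3*u^8*(⅟(a*b))^3 + (6:R)*a^3*b^4*u^10*(⅟(a*b))^3 + (1:R)*a^4*u^9*(⅟(a*b)) + (-9:R)*a^4*b*u^8*(⅟(a*b))^2 + (15:R)*a^4*b^2*u^7*(⅟(a*b))^3 + (-8:R)*a^4*b^3*u^9*(⅟(a*b))^3 + (-2:R)*a^5*b*u^9*(⅟(a*b))^2 + (6:R)*a^5*b^2*u^8*(⅟(a*b))^3 + (1:R)*a^6*b^2*u^9*(⅟(a*b))^3)) * h3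
end

section
/- The polynomial f(u) = b⁴u⁸ + 3ab³u⁷ + 3a²b²u⁶ + (a³b + 7ab²)u⁵ + (6a²b − 6b²)u⁴ + 9abu³ + (−a² + 8b)u² − 3au − 3 is Eisenstein at the ideal (3, a² + b) of ℤ[a,b] after reversing: the constant term −3 lies in (3, a²+b) but not in (3, a²+b)², all non-leading coefficients (coefficients of u⁰ through u⁷) lie in (3, a²+b), and the leading coefficient b⁴ does not lie in (3, a²+b). -/
open Polynomial

/-- Auxiliary hom ℤ[a,b] → 𝔽₃[x], a ↦ x, b ↦ −x². -/
noncomputable def stmt14aux : MvPolynomial (Fin 2) ℤ →+* Polynomial (ZMod 3) :=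
  MvPolynomial.eval₂Hom (Int.castRingHom (Polynomial (ZMod 3)))
    (fun i : Fin 2 => if i = 0 then X else -X ^ 2)

lemma stmt14aux_X0 : stmt14aux (MvPolynomial.X 0) = X := by
  simp [stmt14aux]

lemma stmt14aux_X1 : stmt14aux (MvPolynomial.X 1) = -X ^ 2 := by
  simp [stmt14aux]

lemma stmt14aux_three : stmt14aux 3 = 0 := by
  have h : stmt14aux 3 = ((3:ℤ) : Polynomial (ZMod 3)) := by
    simp [stmt14aux]
  have h30 : ((3:ℤ) : Polynomial (ZMod 3)) = 0 := by
    have := CharP.cast_eq_zero (Polynomial (ZMod 3)) 3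
    push_cast at this ⊢
    simpa using this
  rw [h, h30]

/-- f is Eisenstein at P = (3, a² + b) ⊂ ℤ[a,b]: all non-leading
coefficients lie in P, the leading coefficient b⁴ does not lie in P, and the
constant term −3 does not lie in P². -/
theorem stmt_14 :
    let a : MvPolynomial (Fin 2) ℤ := MvPolynomial.X 0
    let b : MvPolynomial (Fin 2) ℤ := MvPolynomial.X 1
    let P : Ideal (MvPolynomial (Fin 2) ℤ) := Ideal.span {3, a ^ 2 + b}
    let f : Polynomial (MvPolynomial (Fin 2) ℤ) :=
      C (b ^ 4) * X ^ 8 + C (3 * a * b ^ 3) * X ^ 7 + C (3 * a ^ 2 * b ^ 2) * X ^ 6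
        + C (a ^ 3 * b + 7 * a * b ^ 2) * X ^ 5 + C (6 * a ^ 2 * b - 6 * b ^ 2) * X ^ 4
        + C (9 * a * b) * X ^ 3 + C (-a ^ 2 + 8 * b) * X ^ 2 - C (3 * a) * X - 3
    (∀ i < 8, f.coeff i ∈ P) ∧ b ^ 4 ∉ P ∧ f.coeff 0 ∉ P ^ 2 := by
  intro a b P f
  have hc0 : f.coeff 0 = -3 := by
    simp only [f, coeff_add, coeff_sub, coeff_C_mul, coeff_X_pow, coeff_X,
      show (3 : Polynomial (MvPolynomial (Fin 2) ℤ)) = C 3 from (map_ofNat C 3).symm, coeff_C]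
    norm_num
  have hc1 : f.coeff 1 = -(3 * a) := by
    simp only [f, coeff_add, coeff_sub, coeff_C_mul, coeff_X_pow, coeff_X,
      show (3 : Polynomial (MvPolynomial (Fin 2) ℤ)) = C 3 from (map_ofNat C 3).symm, coeff_C]
    norm_num
  have hc2 : f.coeff 2 = -a ^ 2 + 8 * b := by
    simp only [f, coeff_add, coeff_sub, coeff_C_mul, coeff_X_pow, coeff_X,
      show (3 : Polynomial (MvPolynomial (Fin 2) ℤ)) = C 3 from (map_ofNat C 3).symm, coeff_C]
    norm_num
  have hc3 : f.coeff 3 = 9 * a * b := by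
    simp only [f, coeff_add, coeff_sub, coeff_C_mul, coeff_X_pow, coeff_X,
      show (3 : Polynomial (MvPolynomial (Fin 2) ℤ)) = C 3 from (map_ofNat C 3).symm, coeff_C]
    norm_num
  have hc4 : f.coeff 4 = 6 * a ^ 2 * b - 6 * b ^ 2 := by
    simp only [f, coeff_add, coeff_sub, coeff_C_mul, coeff_X_pow, coeff_X,
      show (3 : Polynomial (MvPolynomial (Fin 2) ℤ)) = C 3 from (map_ofNat C 3).symm, coeff_C]
    norm_num
  have hc5 : f.coeff 5 = a ^ 3 * b + 7 * a * b ^ 2 := by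
    simp only [f, coeff_add, coeff_sub, coeff_C_mul, coeff_X_pow, coeff_X,
      show (3 : Polynomial (MvPolynomial (Fin 2) ℤ)) = C 3 from (map_ofNat C 3).symm, coeff_C]
    norm_num
  have hc6 : f.coeff 6 = 3 * a ^ 2 * b ^ 2 := by
    simp only [f, coeff_add, coeff_sub, coeff_C_mul, coeff_X_pow, coeff_X,
      show (3 : Polynomial (MvPolynomial (Fin 2) ℤ)) = C 3 from (map_ofNat C 3).symm, coeff_C]
    norm_num
  have hc7 : f.coeff 7 = 3 * a * b ^ 3 := by
    simp only [f, coeff_add, coeff_sub, coeff_C_mul, coeff_X_pow, coeff_X,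
      show (3 : Polynomial (MvPolynomial (Fin 2) ℤ)) = C 3 from (map_ofNat C 3).symm, coeff_C]
    norm_num
  refine ⟨?_, ?_, ?_⟩
  · intro i hi
    interval_cases i
    · rw [hc0, Ideal.mem_span_pair]; exact ⟨-1, 0, by ring⟩
    · rw [hc1, Ideal.mem_span_pair]; exact ⟨-a, 0, by ring⟩
    · rw [hc2, Ideal.mem_span_pair]; exact ⟨3 * b, -1, by ring⟩
    · rw [hc3, Ideal.mem_span_pair]; exact ⟨3 * a * b, 0, by ring⟩
    · rw [hc4, Ideal.mem_span_pair]; exact ⟨2 * a ^ 2 * b - 2 * b ^ 2, 0, by ring⟩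
    · rw [hc5, Ideal.mem_span_pair]; exact ⟨2 * a * b ^ 2, a * b, by ring⟩
    · rw [hc6, Ideal.mem_span_pair]; exact ⟨a ^ 2 * b ^ 2, 0, by ring⟩
    · rw [hc7, Ideal.mem_span_pair]; exact ⟨a * b ^ 3, 0, by ring⟩
  · intro hmem
    have hψ : P ≤ RingHom.ker stmt14aux := by
      rw [Ideal.span_le]
      rintro x (rfl | rfl)
      · simpa [RingHom.mem_ker] using stmt14aux_three
      · show stmt14aux (MvPolynomial.X 0 ^ 2 + MvPolynomial.X 1) = 0
        rw [map_add, map_pow, stmt14aux_X0, stmt14aux_X1]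
        ring
    have h1 : stmt14aux (MvPolynomial.X 1) ^ 4 = 0 := by
      have := hψ hmem
      rw [RingHom.mem_ker, map_pow] at this
      exact this
    rw [stmt14aux_X1] at h1
    have h8 : ((-X ^ 2 : Polynomial (ZMod 3)) ^ 4) = X ^ 8 := by ring
    rw [h8] at h1
    exact pow_ne_zero 8 X_ne_zero h1
  · intro hmem
    rw [hc0] at hmem
    have h3 : MvPolynomial.constantCoeff (3 : MvPolynomial (Fin 2) ℤ) = 3 := map_ofNat _ 3
    have hP : P ≤ Ideal.comap (MvPolynomial.constantCoeff (σ := Fin 2) (R := ℤ))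
        (Ideal.span {(3:ℤ)}) := by
      rw [Ideal.span_le]
      rintro x (rfl | rfl)
      · rw [SetLike.mem_coe, Ideal.mem_comap, Ideal.mem_span_singleton, h3]
      · rw [SetLike.mem_coe, Ideal.mem_comap, Ideal.mem_span_singleton]
        have : (MvPolynomial.constantCoeff (a ^ 2 + b) : ℤ) = 0 := by
          rw [map_add, map_pow,
            show MvPolynomial.constantCoeff a = 0 from MvPolynomial.constantCoeff_X (R := ℤ) 0,
            show MvPolynomial.constantCoeff b = 0 from MvPolynomial.constantCoeff_X (R := ℤ) 1]
          ring
        rw [this]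
        exact dvd_zero 3
    have hP2 : P ^ 2 ≤ Ideal.comap (MvPolynomial.constantCoeff (σ := Fin 2) (R := ℤ))
        (Ideal.span {(9:ℤ)}) := by
      rw [pow_two]
      refine Ideal.mul_le.mpr fun r hr s hs => ?_
      obtain ⟨u, hu⟩ := Ideal.mem_span_singleton.mp (hP hr)
      obtain ⟨v, hv⟩ := Ideal.mem_span_singleton.mp (hP hs)
      simp only [Ideal.mem_comap, Ideal.mem_span_singleton, map_mul, hu, hv]
      exact ⟨u * v, by ring⟩
    have h2 := hP2 hmem
    rw [Ideal.mem_comap, map_neg, Ideal.mem_span_singleton, h3] at h2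
    obtain ⟨c, hc⟩ := h2
    omega
end
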